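/- Let V be a finite-dimensional vector space over ℂ with a nondegenerate symmetric bilinear form b, and assume V contains a nonzero isotropic vector ω (i.e. ω ≠ 0 and b(ω,ω) = 0). Then for every s ≥ 1, the sum Σ_M T_M over all perfect matchings M of {1,…,2s} is a nonzero element of V^{⊗2s}. -/

import Mathlib

open scoped TensorProduct

/-- A perfect matching of `{1,…,m}`, encoded as a fixed-point-free involution of `Fin m`:
the blocks of the matching are the pairs `{i, σ i}`. -/
abbrev PerfectMatching (m : ℕ) : Type :=
  {σ : Equiv.Perm (Fin m) // ∀ i, σ (σ i) = i ∧ σ i ≠ i}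

/-- The tensor `T_M ∈ V^{⊗2s}` attached to a perfect matching `M` (given as a fixed-point-free
involution `σ` of `Fin (2*s)`): a copy of the Casimir element `t = ∑ₖ eₖ ⊗ fₖ` of the bilinear
form (where `(eₖ)`, `(fₖ)` are dual bases) is placed in the pair of slots `{i, σ i}` for each
block of `M`, the factor `e` going to the smaller slot and `f` to the larger one. -/
noncomputable def matchingTensor {V : Type*} [AddCommGroup V] [Module ℂ V]
    {ι : Type*} [Fintype ι] [DecidableEq ι] (e f : ι → V) {s : ℕ}
    (σ : Equiv.Perm (Fin (2 * s))) : ⨂[ℂ] _ : Fin (2 * s), V :=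
  ∑ h : Fin (2 * s) → ι,
    if h ∘ ⇑σ = h then
      PiTensorProduct.tprod ℂ (fun i => if i < σ i then e (h i) else f (h i))
    else 0

section Helpers

variable {V : Type*} [AddCommGroup V] [Module ℂ V]

/-- The functional on `V^{⊗n}` obtained by applying `φ` in every slot and multiplying. -/
noncomputable def evalFun (φ : V →ₗ[ℂ] ℂ) (n : ℕ) :
    (⨂[ℂ] _ : Fin n, V) →ₗ[ℂ] ℂ :=
  PiTensorProduct.lift ((MultilinearMap.mkPiAlgebra ℂ (Fin n) ℂ).compLinearMap fun _ => φ)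

lemma evalFun_tprod (φ : V →ₗ[ℂ] ℂ) (n : ℕ) (x : Fin n → V) :
    evalFun φ n (PiTensorProduct.tprod ℂ x) = ∏ i, φ (x i) := by
  simp [evalFun]

variable {s : ℕ} (σ : Equiv.Perm (Fin (2 * s)))

/-- Extend a function on the "lower half" of the blocks to a `σ`-invariant function. -/
def extFun {ι : Type*} (σ : Equiv.Perm (Fin (2 * s)))
    (hσ : ∀ i, σ (σ i) = i ∧ σ i ≠ i)
    (g : {i : Fin (2 * s) // i < σ i} → ι) : Fin (2 * s) → ι :=
  fun j => if hj : j < σ j then g ⟨j, hj⟩ else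
    g ⟨σ j, by
      rcases (hσ j).2.lt_or_gt with h | h
      · simpa [(hσ j).1] using h
      · exact absurd h hj⟩

lemma card_lower (hσ : ∀ i, σ (σ i) = i ∧ σ i ≠ i) :
    Fintype.card {i : Fin (2 * s) // i < σ i} = s := by
  classical
  have hcompl : ∀ i : Fin (2 * s), ¬ i < σ i ↔ σ i < i := by
    intro i
    rcases (hσ i).2.lt_or_gt with h | h
    · simp [h, not_lt.2 h.le]
    · simp [h, not_lt.2 h.le]
  have h1 : (Finset.univ.filter fun i : Fin (2 * s) => i < σ i).card
      = (Finset.univ.filter fun i : Fin (2 * s) => ¬ i < σ i).card := by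
    refine Finset.card_nbij (fun i => σ i) ?_ ?_ ?_
    · intro i hi
      simp only [Finset.coe_filter, Finset.mem_filter, Finset.mem_univ, true_and,
        Set.mem_setOf_eq] at hi ⊢
      rw [(hσ i).1]; exact not_lt.2 hi.le
    · intro i hi j hj hij
      exact σ.injective hij
    · intro j hj
      simp only [Finset.coe_filter, Finset.mem_univ, true_and, Set.mem_setOf_eq,
        Set.mem_image] at hj ⊢
      refine ⟨σ j, ?_, (hσ j).1⟩
      rw [(hσ j).1]
      exact (hcompl j).1 hj
  have h2 : (Finset.univ.filter fun i : Fin (2 * s) => i < σ i).card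
      + (Finset.univ.filter fun i : Fin (2 * s) => ¬ i < σ i).card = 2 * s := by
    rw [Finset.card_filter_add_card_filter_not]
    simp
  rw [Fintype.card_subtype]
  omega

lemma evalFun_matchingTensor {ι : Type*} [Fintype ι] [DecidableEq ι]
    (φ : V →ₗ[ℂ] ℂ) (e f : ι → V)
    (hσ : ∀ i, σ (σ i) = i ∧ σ i ≠ i) :
    evalFun φ (2 * s) (matchingTensor e f σ) = (∑ k, φ (e k) * φ (f k)) ^ s := by
  classical
  set F : ι → ℂ := fun k => φ (e k) * φ (f k) with hF
  have hcompl : ∀ i : Fin (2 * s), ¬ i < σ i → σ i < i := by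
    intro i hi
    rcases (hσ i).2.lt_or_gt with h | h
    · exact h
    · exact absurd h hi
  rw [matchingTensor, map_sum]
  have step1 : ∀ h : Fin (2 * s) → ι,
      (evalFun φ (2 * s)
        (if h ∘ ⇑σ = h then
          PiTensorProduct.tprod ℂ (fun i => if i < σ i then e (h i) else f (h i))
        else 0))
      = if h ∘ ⇑σ = h then ∏ i, φ (if i < σ i then e (h i) else f (h i)) else 0 := by
    intro h
    split
    · rw [evalFun_tprod]
    · simp
  rw [Finset.sum_congr rfl fun h _ => step1 h]
  rw [← Finset.sum_filter]
  -- rewrite each product as a product over the lower half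
  have step2 : ∀ h : Fin (2 * s) → ι, h ∘ ⇑σ = h →
      (∏ i, φ (if i < σ i then e (h i) else f (h i)))
      = ∏ i : {i : Fin (2 * s) // i < σ i}, F (h i) := by
    intro h hh
    have hhσ : ∀ i, h (σ i) = h i := fun i => congrFun hh i
    rw [← Finset.prod_filter_mul_prod_filter_not Finset.univ
      (fun i : Fin (2 * s) => i < σ i)]
    have hA : (∏ i ∈ Finset.univ.filter fun i : Fin (2 * s) => i < σ i,
        φ (if i < σ i then e (h i) else f (h i)))
        = ∏ i ∈ Finset.univ.filter fun i : Fin (2 * s) => i < σ i, φ (e (h i)) := by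
      apply Finset.prod_congr rfl
      intro i hi
      simp only [Finset.mem_filter] at hi
      rw [if_pos hi.2]
    have hB : (∏ i ∈ Finset.univ.filter fun i : Fin (2 * s) => i < σ i, φ (f (h i)))
        = ∏ i ∈ Finset.univ.filter fun i : Fin (2 * s) => ¬ i < σ i,
            φ (if i < σ i then e (h i) else f (h i)) := by
      refine Finset.prod_nbij (fun i => σ i) ?_ ?_ ?_ ?_
      · intro i hi
        simp only [Finset.mem_filter, Finset.mem_univ, true_and] at hi ⊢
        rw [(hσ i).1]; exact not_lt.2 hi.le
      · intro i hi j hj hij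
        exact σ.injective hij
      · intro j hj
        simp only [Finset.coe_filter, Finset.mem_univ, true_and, Set.mem_setOf_eq,
          Set.mem_image] at hj ⊢
        refine ⟨σ j, ?_, (hσ j).1⟩
        rw [(hσ j).1]
        exact hcompl j hj
      · intro a ha
        simp only [Finset.mem_filter, Finset.mem_univ, true_and] at ha
        have hn : ¬ σ a < σ (σ a) := by rw [(hσ a).1]; exact not_lt.2 ha.le
        rw [if_neg hn, hhσ a]
    rw [hA, ← hB, ← Finset.prod_mul_distrib]
    rw [Finset.prod_subtype (p := fun i : Fin (2 * s) => i < σ i)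
      (Finset.univ.filter fun i : Fin (2 * s) => i < σ i)
      (by intro x; simp) (fun i => F (h i))]
  rw [Finset.sum_congr rfl fun h hh => step2 h (Finset.mem_filter.mp hh).2]
  -- biject σ-invariant functions with functions on the lower half
  have step3 :
      (∑ h ∈ Finset.univ.filter fun h : Fin (2 * s) → ι => h ∘ ⇑σ = h,
        ∏ i : {i : Fin (2 * s) // i < σ i}, F (h i))
      = ∑ g : {i : Fin (2 * s) // i < σ i} → ι,
          ∏ i : {i : Fin (2 * s) // i < σ i}, F (g i) := by
    apply Finset.sum_nbij' (fun h => fun i : {i : Fin (2 * s) // i < σ i} => h i.1)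
      (fun g => extFun σ hσ g)
    · intro h hh
      exact Finset.mem_univ _
    · intro g hg
      simp only [Finset.mem_filter, Finset.mem_univ, true_and]
      funext j
      simp only [Function.comp_apply, extFun]
      by_cases hj : j < σ j
      · have h1 : ¬ σ j < σ (σ j) := by rw [(hσ j).1]; exact not_lt.2 hj.le
        rw [dif_neg h1, dif_pos hj]
        congr 1
        exact Subtype.ext (hσ j).1
      · have hj' : σ j < j := hcompl j hj
        have h2 : σ j < σ (σ j) := by rw [(hσ j).1]; exact hj'
        rw [dif_pos h2, dif_neg hj]
    · intro h hh
      simp only [Finset.mem_filter, Finset.mem_univ, true_and] at hh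
      have hhσ : ∀ i, h (σ i) = h i := fun i => congrFun hh i
      funext j
      simp only [extFun]
      by_cases hj : j < σ j
      · rw [dif_pos hj]
      · rw [dif_neg hj, hhσ j]
    · intro g hg
      funext i
      simp only [extFun, dif_pos i.2]
    · intro h hh
      rfl
  rw [step3]
  rw [show (Finset.univ : Finset ({i : Fin (2 * s) // i < σ i} → ι))
      = Fintype.piFinset (fun _ => Finset.univ) from (Fintype.piFinset_univ).symm]
  rw [← Finset.prod_univ_sum (fun _ : {i : Fin (2 * s) // i < σ i} => (Finset.univ : Finset ι))
    (fun _ k => F k)]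
  rw [Finset.prod_const, Finset.card_univ, card_lower σ hσ]

end Helpers

/-- Let `V` be a finite-dimensional vector space over `ℂ` with a nondegenerate symmetric
bilinear form `b`, and assume `V` contains a nonzero isotropic vector `ω`. Then for every
`s ≥ 1`, the sum `Σ_M T_M` over all perfect matchings `M` of `{1,…,2s}` is a nonzero element
of `V^{⊗2s}`. -/
theorem sum_matchingTensors_ne_zero
    {V : Type*} [AddCommGroup V] [Module ℂ V] [FiniteDimensional ℂ V]
    (B : LinearMap.BilinForm ℂ V)
    (hBsymm : ∀ x y, B x y = B y x)
    (hBnd : B.Nondegenerate)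
    (ω : V) (hω : ω ≠ 0) (hiso : B ω ω = 0)
    {ι : Type*} [Fintype ι] [DecidableEq ι]
    (e f : Module.Basis ι ℂ V)
    (hdual : ∀ k l, B (e k) (f l) = if k = l then 1 else 0)
    (s : ℕ) (hs : 1 ≤ s) :
    (∑ M : PerfectMatching (2 * s), matchingTensor (⇑e) (⇑f) M.1) ≠ 0 := by
  classical
  -- find an anisotropic vector
  obtain ⟨v, hv⟩ : ∃ v : V, B v v ≠ 0 := by
    by_contra hall
    push_neg at hall
    apply hω
    apply hBnd.1
    intro y
    have h2 : B (ω + y) (ω + y) = 0 := hall _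
    simp only [map_add, LinearMap.add_apply] at h2
    rw [hall ω, hall y, hBsymm y ω] at h2
    have h4 : (2 : ℂ) * B ω y = 0 := by linear_combination h2
    exact (mul_eq_zero.mp h4).resolve_left two_ne_zero
  set φ : V →ₗ[ℂ] ℂ := B v with hφ
  -- the trace identity
  have htrace : (∑ k, φ (e k) * φ (f k)) = B v v := by
    have hrep : ∀ k, φ (f k) = e.repr v k := by
      intro k
      have : B v (f k) = B (∑ l, e.repr v l • e l) (f k) := by
        rw [Module.Basis.sum_repr e v]
      rw [hφ]
      simp only [this, map_sum, LinearMap.sum_apply, LinearMap.map_smul,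
        LinearMap.smul_apply, hdual, smul_eq_mul]
      simp [Finset.sum_ite_eq']
    have hexp : B v v = ∑ k, e.repr v k * B v (e k) := by
      have h5 : B v v = B v (∑ k, e.repr v k • e k) := by rw [Module.Basis.sum_repr]
      rw [h5, map_sum]
      simp [smul_eq_mul]
    rw [hexp]
    apply Finset.sum_congr rfl
    intro k _
    rw [hrep k, hφ]
    ring
  -- there is at least one perfect matching
  have hcard : 0 < Fintype.card (PerfectMatching (2 * s)) := by
    have h2s : 0 < 2 * s := by omega
    haveI : NeZero (2 * s) := ⟨by omega⟩
    refine Fintype.card_pos_iff.mpr ⟨⟨Equiv.addRight (⟨s, by omega⟩ : Fin (2 * s)), ?_⟩⟩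
    intro i
    constructor
    · simp only [Equiv.coe_addRight]
      have : (⟨s, by omega⟩ : Fin (2 * s)) + ⟨s, by omega⟩ = 0 := by
        apply Fin.ext
        simp only [Fin.add_def]
        rw [show s + s = 2 * s by ring, Nat.mod_self]
        simp [Fin.val_zero]
      rw [add_assoc, this, add_zero]
    · simp only [Equiv.coe_addRight]
      intro hcontra
      have := add_right_cancel (a := i) (b := (⟨s, by omega⟩ : Fin (2 * s))) (c := 0)
      have h0 : (⟨s, by omega⟩ : Fin (2 * s)) = 0 := by
        have := congrArg (fun x => x - i) hcontra
        simpa [add_sub_cancel_left] using this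
      have := congrArg Fin.val h0
      simp at this
      omega
  intro hzero
  have happ := congrArg (evalFun φ (2 * s)) hzero
  rw [map_sum, map_zero] at happ
  have heach : ∀ M : PerfectMatching (2 * s),
      evalFun φ (2 * s) (matchingTensor (⇑e) (⇑f) M.1) = (B v v) ^ s := by
    intro M
    rw [evalFun_matchingTensor M.1 φ (⇑e) (⇑f) M.2, htrace]
  rw [Finset.sum_congr rfl fun M _ => heach M] at happ
  rw [Finset.sum_const, Finset.card_univ] at happ
  have hne : (Fintype.card (PerfectMatching (2 * s)) : ℂ) * (B v v) ^ s ≠ 0 := by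
    apply mul_ne_zero
    · exact_mod_cast Nat.cast_ne_zero.mpr hcard.ne'
    · exact pow_ne_zero _ hv
  rw [nsmul_eq_mul] at happ
  exact hne happ
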